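/- If p, p' ∈ ℝ³ with |p − p'| ≤ η and c ≥ 1, then the operator-norm difference of the velocity Jacobians satisfies ‖𝔸_c(p) − 𝔸_c(p')‖ ≤ C η / (c·γ_c(p)²) for a constant C independent of c, p, p' (assuming η ≤ 1). -/

import Mathlib

set_option maxHeartbeats 1000000
set_option synthInstance.maxHeartbeats 400000


noncomputable section

/-- The relativistic Lorentz factor `γ_c(p) = √(1 + |p|²/c²)`. -/
def gam (c : ℝ) (p : EuclideanSpace ℝ (Fin 3)) : ℝ := Real.sqrt (1 + ‖p‖ ^ 2 / c ^ 2)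

/-- The matrix `𝔸_c(p) = (1/γ_c(p)) I₃ − (1/γ_c(p)³) (p_i p_j / c²)_{i,j}`. -/
def Ac (c : ℝ) (p : EuclideanSpace ℝ (Fin 3)) : Matrix (Fin 3) (Fin 3) ℝ :=
  (gam c p)⁻¹ • (1 : Matrix (Fin 3) (Fin 3) ℝ) -
    ((gam c p) ^ 3)⁻¹ • Matrix.of fun i j => p i * p j / c ^ 2

/-- The operator (Euclidean `ℓ²`) norm of a real 3×3 matrix. -/
def opNorm (M : Matrix (Fin 3) (Fin 3) ℝ) : ℝ :=
  ‖Matrix.toEuclideanCLM (𝕜 := ℝ) M‖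

lemma outer_clm (a b : EuclideanSpace ℝ (Fin 3)) :
    ‖Matrix.toEuclideanCLM (𝕜 := ℝ) (Matrix.of fun i j => a i * b j)‖ ≤ ‖a‖ * ‖b‖ := by
  apply ContinuousLinearMap.opNorm_le_bound _ (by positivity)
  intro x
  have hx : Matrix.toEuclideanCLM (𝕜 := ℝ) (Matrix.of fun i j => a i * b j) x
      = (∑ j, b j * x j) • a := by
    ext i
    have h : (Matrix.toEuclideanCLM (𝕜 := ℝ) (Matrix.of fun i j => a i * b j) x) i
        = Matrix.mulVec (Matrix.of fun i j => a i * b j) (fun j => x j) i := rfl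
    rw [h]
    simp [Matrix.mulVec, dotProduct, mul_assoc]
    rw [Finset.sum_mul]
    exact Finset.sum_congr rfl fun j _ => by ring
  rw [hx, norm_smul]
  have h1 : (∑ j, b j * x j) = (inner ℝ b x : ℝ) := by
    rw [PiLp.inner_apply]; simp only [Real.inner_apply]
  have h2 : ‖(∑ j, b j * x j)‖ ≤ ‖b‖ * ‖x‖ := by
    rw [h1, Real.norm_eq_abs]
    exact abs_real_inner_le_norm b x
  calc ‖(∑ j, b j * x j)‖ * ‖a‖ ≤ (‖b‖ * ‖x‖) * ‖a‖ :=
        mul_le_mul_of_nonneg_right h2 (norm_nonneg a)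
    _ = ‖a‖ * ‖b‖ * ‖x‖ := by ring

lemma gam_sq (c : ℝ) (hc : 0 < c) (p : EuclideanSpace ℝ (Fin 3)) :
    (gam c p) ^ 2 = 1 + ‖p‖ ^ 2 / c ^ 2 := by
  rw [gam, Real.sq_sqrt (by positivity)]

lemma gam_ge_one (c : ℝ) (hc : 0 < c) (p : EuclideanSpace ℝ (Fin 3)) : 1 ≤ gam c p := by
  have h : (1:ℝ) ≤ 1 + ‖p‖ ^ 2 / c ^ 2 := le_add_of_nonneg_right (by positivity)
  calc (1:ℝ) = Real.sqrt 1 := Real.sqrt_one.symm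
    _ ≤ _ := Real.sqrt_le_sqrt h

lemma norm_le_c_gam (c : ℝ) (hc : 0 < c) (p : EuclideanSpace ℝ (Fin 3)) :
    ‖p‖ ≤ c * gam c p := by
  have hg : 1 ≤ gam c p := gam_ge_one c hc p
  have h : ‖p‖ ^ 2 ≤ (c * gam c p) ^ 2 := by
    rw [mul_pow, gam_sq c hc]
    have : c ^ 2 * (1 + ‖p‖ ^ 2 / c ^ 2) = c ^ 2 + ‖p‖ ^ 2 := by field_simp
    rw [this]; nlinarith [sq_nonneg c]
  nlinarith [norm_nonneg p, mul_pos hc (lt_of_lt_of_le one_pos hg)]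

lemma gam_lip (c : ℝ) (hc : 0 < c) (p p' : EuclideanSpace ℝ (Fin 3)) :
    |gam c p - gam c p'| ≤ ‖p - p'‖ / c := by
  set a := ‖p‖ / c with ha
  set b := ‖p'‖ / c with hb
  have ha0 : 0 ≤ a := by positivity
  have hb0 : 0 ≤ b := by positivity
  have hsa : gam c p = Real.sqrt (1 + a ^ 2) := by rw [gam, ha, div_pow]
  have hsb : gam c p' = Real.sqrt (1 + b ^ 2) := by rw [gam, hb, div_pow]
  have hs2 : (gam c p) ^ 2 = 1 + a ^ 2 := by rw [hsa, Real.sq_sqrt (by positivity)]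
  have ht2 : (gam c p') ^ 2 = 1 + b ^ 2 := by rw [hsb, Real.sq_sqrt (by positivity)]
  have h1 : 1 ≤ gam c p := gam_ge_one c hc p
  have h2 : 1 ≤ gam c p' := gam_ge_one c hc p'
  have has : a ≤ gam c p := by nlinarith
  have hbt : b ≤ gam c p' := by nlinarith
  have hab : |a - b| ≤ ‖p - p'‖ / c := by
    rw [ha, hb, div_sub_div_same, abs_div, abs_of_pos hc]
    gcongr
    exact abs_norm_sub_norm_le p p'
  refine le_trans ?_ hab
  rw [abs_sub_le_iff] at hab ⊢
  constructor <;> nlinarith [le_abs_self (a - b), neg_abs_le (a - b)]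

/-- If `|p − p'| ≤ η ≤ 1` and `c ≥ 1`, then
`‖𝔸_c(p) − 𝔸_c(p')‖ ≤ C η / (c γ_c(p)²)` with `C` independent of `c, p, p'`. -/
theorem stmt18 :
    ∃ C > 0, ∀ (c η : ℝ), 1 ≤ c → 0 < η → η ≤ 1 →
      ∀ p p' : EuclideanSpace ℝ (Fin 3), ‖p - p'‖ ≤ η →
        opNorm (Ac c p - Ac c p') ≤ C * η / (c * (gam c p) ^ 2) := by
  refine ⟨19, by norm_num, fun c η hc hη hη1 p p' hpp' => ?_⟩
  have hc0 : (0:ℝ) < c := lt_of_lt_of_le one_pos hc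
  set G := gam c p with hGdef
  set G' := gam c p' with hG'def
  have hG1 : 1 ≤ G := gam_ge_one c hc0 p
  have hG'1 : 1 ≤ G' := gam_ge_one c hc0 p'
  have hG0 : 0 < G := lt_of_lt_of_le one_pos hG1
  have hG'0 : 0 < G' := lt_of_lt_of_le one_pos hG'1
  have hn : ‖p‖ ≤ c * G := norm_le_c_gam c hc0 p
  have hn' : ‖p'‖ ≤ c * G' := norm_le_c_gam c hc0 p'
  have hlipd : |G - G'| ≤ ‖p - p'‖ / c := gam_lip c hc0 p p'
  have hdη : ‖p - p'‖ ≤ η := hpp'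
  have hlip : |G - G'| ≤ η / c := hlipd.trans (by gcongr)
  have hηc1 : η / c ≤ 1 := by
    rw [div_le_one hc0]; exact hη1.trans hc
  have hGG'1 : |G - G'| ≤ 1 := hlip.trans hηc1
  have hG'low : G ≤ 2 * G' := by
    have := abs_sub_le_iff.mp hGG'1
    linarith
  have hG'up : G' ≤ 2 * G := by
    have := abs_sub_le_iff.mp hGG'1
    linarith
  -- the three CLM pieces
  set O1 : Matrix (Fin 3) (Fin 3) ℝ :=
    Matrix.of fun i j => (p - p') i * (((c^2)⁻¹ : ℝ) • p) j with hO1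
  set O2 : Matrix (Fin 3) (Fin 3) ℝ :=
    Matrix.of fun i j => p' i * (((c^2)⁻¹ : ℝ) • (p - p')) j with hO2
  set P' : Matrix (Fin 3) (Fin 3) ℝ :=
    Matrix.of fun i j => p' i * (((c^2)⁻¹ : ℝ) • p') j with hP'
  have hmat : Ac c p - Ac c p' =
      (G⁻¹ - G'⁻¹) • (1 : Matrix (Fin 3) (Fin 3) ℝ)
      - (G ^ 3)⁻¹ • (O1 + O2)
      - ((G ^ 3)⁻¹ - (G' ^ 3)⁻¹) • P' := by
    unfold Ac
    rw [← hGdef, ← hG'def]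
    ext i j
    simp only [hO1, hO2, hP', Matrix.sub_apply, Matrix.add_apply, Matrix.smul_apply,
      Matrix.of_apply, smul_eq_mul, PiLp.sub_apply, PiLp.smul_apply]
    ring
  have key : Matrix.toEuclideanCLM (𝕜 := ℝ) (Ac c p - Ac c p') =
      (G⁻¹ - G'⁻¹) • (1 : EuclideanSpace ℝ (Fin 3) →L[ℝ] EuclideanSpace ℝ (Fin 3))
      - (G ^ 3)⁻¹ • (Matrix.toEuclideanCLM (𝕜 := ℝ) O1 + Matrix.toEuclideanCLM (𝕜 := ℝ) O2)
      - ((G ^ 3)⁻¹ - (G' ^ 3)⁻¹) • Matrix.toEuclideanCLM (𝕜 := ℝ) P' := by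
    rw [hmat, map_sub, map_sub, map_smul, map_smul, map_smul, map_one, map_add]
  -- norms of the pieces
  have hq : ‖((c^2)⁻¹ : ℝ) • p‖ = ‖p‖ / c ^ 2 := by
    rw [norm_smul, Real.norm_eq_abs, abs_of_pos (by positivity)]
    ring
  have hqd : ‖((c^2)⁻¹ : ℝ) • (p - p')‖ = ‖p - p'‖ / c ^ 2 := by
    rw [norm_smul, Real.norm_eq_abs, abs_of_pos (by positivity)]
    ring
  have hq' : ‖((c^2)⁻¹ : ℝ) • p'‖ = ‖p'‖ / c ^ 2 := by
    rw [norm_smul, Real.norm_eq_abs, abs_of_pos (by positivity)]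
    ring
  have hO1n : ‖Matrix.toEuclideanCLM (𝕜 := ℝ) O1‖ ≤ ‖p - p'‖ * (‖p‖ / c ^ 2) :=
    (outer_clm (p - p') _).trans_eq (by rw [hq])
  have hO2n : ‖Matrix.toEuclideanCLM (𝕜 := ℝ) O2‖ ≤ ‖p'‖ * (‖p - p'‖ / c ^ 2) :=
    (outer_clm p' _).trans_eq (by rw [hqd])
  have hP'n : ‖Matrix.toEuclideanCLM (𝕜 := ℝ) P'‖ ≤ ‖p'‖ * (‖p'‖ / c ^ 2) :=
    (outer_clm p' _).trans_eq (by rw [hq'])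
  -- triangle inequality
  have htri : opNorm (Ac c p - Ac c p') ≤
      |G⁻¹ - G'⁻¹| * 1
      + (G ^ 3)⁻¹ * (‖Matrix.toEuclideanCLM (𝕜 := ℝ) O1‖ + ‖Matrix.toEuclideanCLM (𝕜 := ℝ) O2‖)
      + |(G ^ 3)⁻¹ - (G' ^ 3)⁻¹| * ‖Matrix.toEuclideanCLM (𝕜 := ℝ) P'‖ := by
    rw [opNorm, key]
    refine (norm_sub_le _ _).trans ?_
    refine add_le_add ((norm_sub_le _ _).trans (add_le_add ?_ ?_)) ?_
    · have h := norm_smul_le (G⁻¹ - G'⁻¹)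
        (1 : EuclideanSpace ℝ (Fin 3) →L[ℝ] EuclideanSpace ℝ (Fin 3))
      refine h.trans ?_
      rw [Real.norm_eq_abs, ContinuousLinearMap.one_def, ContinuousLinearMap.norm_id]
    · have h := norm_smul_le ((G ^ 3)⁻¹)
        (Matrix.toEuclideanCLM (𝕜 := ℝ) O1 + Matrix.toEuclideanCLM (𝕜 := ℝ) O2)
      refine h.trans ?_
      rw [Real.norm_eq_abs, abs_of_pos (show (0:ℝ) < (G ^ 3)⁻¹ by positivity)]
      exact mul_le_mul_of_nonneg_left (norm_add_le _ _) (by positivity)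
    · have h := norm_smul_le ((G ^ 3)⁻¹ - (G' ^ 3)⁻¹) (Matrix.toEuclideanCLM (𝕜 := ℝ) P')
      refine h.trans ?_
      rw [Real.norm_eq_abs]
  -- term 1
  have ht1 : |G⁻¹ - G'⁻¹| * 1 ≤ 2 * η / (c * G ^ 2) := by
    rw [mul_one, inv_sub_inv hG0.ne' hG'0.ne', abs_div]
    have habs : |G * G'| = G * G' := abs_of_pos (by positivity)
    rw [habs]
    calc |G' - G| / (G * G') ≤ (η / c) / (G * (G / 2)) := by
          refine div_le_div₀ (by positivity) ?_ (by positivity) ?_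
          · rw [abs_sub_comm]; exact hlip
          · nlinarith
      _ = 2 * η / (c * G ^ 2) := by
          field_simp
  -- term 2
  have ht2 : (G ^ 3)⁻¹ * (‖Matrix.toEuclideanCLM (𝕜 := ℝ) O1‖ + ‖Matrix.toEuclideanCLM (𝕜 := ℝ) O2‖)
      ≤ 3 * η / (c * G ^ 2) := by
    have hsum : ‖Matrix.toEuclideanCLM (𝕜 := ℝ) O1‖ + ‖Matrix.toEuclideanCLM (𝕜 := ℝ) O2‖
        ≤ 3 * η * G / c := by
      have e1 : ‖p - p'‖ * (‖p‖ / c ^ 2) ≤ η * (c * G / c ^ 2) := by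
        refine mul_le_mul hdη (by gcongr) (by positivity) hη.le
      have e2 : ‖p'‖ * (‖p - p'‖ / c ^ 2) ≤ (c * (2 * G)) * (η / c ^ 2) := by
        have hle : ‖p'‖ ≤ c * (2 * G) := hn'.trans (by nlinarith)
        refine mul_le_mul hle (by gcongr) (by positivity) (by positivity)
      have e3 : η * (c * G / c ^ 2) + (c * (2 * G)) * (η / c ^ 2) = 3 * η * G / c := by
        field_simp
        ring
      linarith [hO1n.trans e1, hO2n.trans e2]
    calc (G ^ 3)⁻¹ * (‖Matrix.toEuclideanCLM (𝕜 := ℝ) O1‖ + ‖Matrix.toEuclideanCLM (𝕜 := ℝ) O2‖)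
        ≤ (G ^ 3)⁻¹ * (3 * η * G / c) := by gcongr
      _ = 3 * η / (c * G ^ 2) := by
          field_simp
  -- term 3
  have ht3 : |(G ^ 3)⁻¹ - (G' ^ 3)⁻¹| * ‖Matrix.toEuclideanCLM (𝕜 := ℝ) P'‖
      ≤ 14 * η / (c * G ^ 2) := by
    have hnum : |G' ^ 3 - G ^ 3| ≤ (η / c) * (7 * G ^ 2) := by
      have hid : G' ^ 3 - G ^ 3 = (G' - G) * (G' ^ 2 + G' * G + G ^ 2) := by ring
      rw [hid, abs_mul, abs_of_pos (show (0:ℝ) < G' ^ 2 + G' * G + G ^ 2 by positivity)]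
      have h1 : |G' - G| ≤ η / c := by rw [abs_sub_comm]; exact hlip
      have h2 : G' ^ 2 + G' * G + G ^ 2 ≤ 7 * G ^ 2 := by nlinarith
      exact mul_le_mul h1 h2 (by positivity) (by positivity)
    have hcube : |(G ^ 3)⁻¹ - (G' ^ 3)⁻¹| ≤ (η / c) * (7 * G ^ 2) / (G ^ 3 * G' ^ 3) := by
      rw [inv_sub_inv (show (G:ℝ) ^ 3 ≠ 0 by positivity) (show (G':ℝ) ^ 3 ≠ 0 by positivity),
        abs_div]
      have habs : |G ^ 3 * G' ^ 3| = G ^ 3 * G' ^ 3 := abs_of_pos (by positivity)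
      rw [habs]
      exact div_le_div_of_nonneg_right hnum (by positivity) |>.trans_eq rfl
    have hP'G : ‖Matrix.toEuclideanCLM (𝕜 := ℝ) P'‖ ≤ G' ^ 2 := by
      refine hP'n.trans ?_
      have : ‖p'‖ * (‖p'‖ / c ^ 2) = (‖p'‖ / c) ^ 2 := by ring
      rw [this]
      have hb : ‖p'‖ / c ≤ G' := by rw [div_le_iff₀ hc0]; linarith [hn']
      nlinarith [norm_nonneg p', div_nonneg (norm_nonneg p') hc0.le]
    calc |(G ^ 3)⁻¹ - (G' ^ 3)⁻¹| * ‖Matrix.toEuclideanCLM (𝕜 := ℝ) P'‖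
        ≤ ((η / c) * (7 * G ^ 2) / (G ^ 3 * G' ^ 3)) * G' ^ 2 := by
          exact mul_le_mul hcube hP'G (norm_nonneg _) (by positivity)
      _ = 7 * η / (c * G * G') := by
          field_simp
      _ ≤ 14 * η / (c * G ^ 2) := by
          rw [div_le_div_iff₀ (by positivity) (by positivity)]
          have hkey := mul_le_mul_of_nonneg_left hG'low
            (show (0:ℝ) ≤ 7 * η * c * G by positivity)
          nlinarith [hkey]
  have hsum : 2 * η / (c * G ^ 2) + 3 * η / (c * G ^ 2) + 14 * η / (c * G ^ 2)
      = 19 * η / (c * G ^ 2) := by ring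
  linarith [htri, ht1, ht2, ht3]
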